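/- With the notation of the vortex-blob discretization (ω ∈ L¹(ℝ²), ℓ = ε⁴, Γ_i = ∫_{Q_i} ω, ω_ε = Σ_i Γ_i φ_ε(·−α_i)), one has the L^∞ bound ‖ω_ε − φ_ε ∗ ω‖_{L^∞(ℝ²)} ≤ √2 (ℓ/ε³) ‖∇φ‖_{L^∞} ‖ω‖_{L¹} = √2 ε ‖∇φ‖_{L^∞} ‖ω‖_{L¹}, and by interpolation, for every 1 ≤ p ≤ ∞, ‖ω_ε − φ_ε ∗ ω‖_{L^p} ≤ C ‖ω‖_{L¹} ε^{1 + 2/p} for a constant C depending only on ‖∇φ‖_{L¹} and ‖∇φ‖_{L^∞}. -/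

import Mathlib

open MeasureTheory

/-- Square of side `ℓ` centered at the lattice point `ℓ i`. -/
def blobSquare (ℓ : ℝ) (i : ℤ × ℤ) : Set (ℝ × ℝ) :=
  Set.Ico (ℓ * (i.1 : ℝ) - ℓ / 2) (ℓ * (i.1 : ℝ) + ℓ / 2) ×ˢ
    Set.Ico (ℓ * (i.2 : ℝ) - ℓ / 2) (ℓ * (i.2 : ℝ) + ℓ / 2)

/-- Rescaled mollifier `φ_ε(x) = ε⁻² φ(x/ε)`. -/
noncomputable def mollifier (φ : ℝ × ℝ → ℝ) (ε : ℝ) (x : ℝ × ℝ) : ℝ :=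
  (ε ^ 2)⁻¹ * φ (ε⁻¹ • x)

/-- The vortex-blob approximation `ω_ε = Σ_i (∫_{Q_i} ω) φ_ε(· − α_i)` with `ℓ = ε⁴`. -/
noncomputable def blobApprox (φ : ℝ × ℝ → ℝ) (ω : ℝ × ℝ → ℝ) (ε : ℝ) (x : ℝ × ℝ) : ℝ :=
  ∑' i : ℤ × ℤ, (∫ y in blobSquare (ε ^ 4) i, ω y) *
    mollifier φ ε (x - ((ε ^ 4) * (i.1 : ℝ), (ε ^ 4) * (i.2 : ℝ)))

/-- `φ_ε ∗ ω`. -/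
noncomputable def mollified (φ : ℝ × ℝ → ℝ) (ω : ℝ × ℝ → ℝ) (ε : ℝ) (x : ℝ × ℝ) : ℝ :=
  ∫ y, mollifier φ ε (x - y) * ω y

/-! ### Auxiliary material -/

open ENNReal Pointwise

/-- Index of the square containing a point. -/
noncomputable def VBind (ℓ : ℝ) (y : ℝ × ℝ) : ℤ × ℤ := (⌊y.1 / ℓ + 1/2⌋, ⌊y.2 / ℓ + 1/2⌋)

/-- Center of a square. -/
noncomputable def VBc (ℓ : ℝ) (i : ℤ × ℤ) : ℝ × ℝ := (ℓ * (i.1 : ℝ), ℓ * (i.2 : ℝ))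

lemma VB_coord {ℓ : ℝ} (hℓ : 0 < ℓ) (r : ℝ) (n : ℤ) :
    r ∈ Set.Ico (ℓ * (n : ℝ) - ℓ / 2) (ℓ * (n : ℝ) + ℓ / 2) ↔ ⌊r / ℓ + 1/2⌋ = n := by
  rw [Set.mem_Ico, Int.floor_eq_iff]
  rw [div_add' _ _ _ hℓ.ne', le_div_iff₀ hℓ, div_lt_iff₀ hℓ]
  constructor <;> rintro ⟨h1, h2⟩ <;> constructor <;> nlinarith

lemma mem_blobSquare_iff {ℓ : ℝ} (hℓ : 0 < ℓ) (y : ℝ × ℝ) (i : ℤ × ℤ) :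
    y ∈ blobSquare ℓ i ↔ VBind ℓ y = i := by
  rw [blobSquare, Set.mem_prod, VB_coord hℓ, VB_coord hℓ, VBind, Prod.ext_iff]

lemma mem_blobSquare_ind {ℓ : ℝ} (hℓ : 0 < ℓ) (y : ℝ × ℝ) : y ∈ blobSquare ℓ (VBind ℓ y) :=
  (mem_blobSquare_iff hℓ y _).2 rfl

lemma blobSquare_disjoint {ℓ : ℝ} (hℓ : 0 < ℓ) :
    Pairwise (Function.onFun Disjoint (blobSquare ℓ)) := by
  intro i j hij
  rw [Function.onFun, Set.disjoint_left]
  intro y hy hy'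
  rw [mem_blobSquare_iff hℓ] at hy hy'
  exact hij (hy ▸ hy')

lemma blobSquare_iUnion {ℓ : ℝ} (hℓ : 0 < ℓ) : (⋃ i, blobSquare ℓ i) = Set.univ :=
  Set.eq_univ_of_forall fun y => Set.mem_iUnion.2 ⟨VBind ℓ y, mem_blobSquare_ind hℓ y⟩

lemma blobSquare_measurable (ℓ : ℝ) (i : ℤ × ℤ) : MeasurableSet (blobSquare ℓ i) :=
  measurableSet_Ico.prod measurableSet_Ico

lemma measurable_VBind (ℓ : ℝ) : Measurable (VBind ℓ) :=
  ((Int.measurable_floor.comp ((measurable_fst.div_const ℓ).add_const _)).prodMk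
    (Int.measurable_floor.comp ((measurable_snd.div_const ℓ).add_const _)))

lemma norm_sub_center {ℓ : ℝ} (hℓ : 0 < ℓ) {y : ℝ × ℝ} {i : ℤ × ℤ}
    (hy : y ∈ blobSquare ℓ i) : ‖y - VBc ℓ i‖ ≤ ℓ / 2 := by
  obtain ⟨h1, h2⟩ := hy
  rw [Set.mem_Ico] at h1 h2
  rw [Prod.norm_def]
  refine max_le ?_ ?_ <;> rw [Real.norm_eq_abs, abs_le] <;> constructor <;>
    simp only [Prod.fst_sub, Prod.snd_sub] <;> simp only [VBc] <;>
    linarith [h1.1, h1.2, h2.1, h2.2]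

section Moll

variable {φ : ℝ × ℝ → ℝ} {ε : ℝ}

lemma moll_cont (hφ : ContDiff ℝ 1 φ) (ε : ℝ) : Continuous (mollifier φ ε) :=
  continuous_const.mul (hφ.continuous.comp (continuous_const_smul _))

lemma fderiv_bound (hφ : ContDiff ℝ 1 φ) (hφc : HasCompactSupport φ) :
    ∀ z, ‖fderiv ℝ φ z‖ ≤ ⨆ z, ‖fderiv ℝ φ z‖ := by
  intro z
  apply le_ciSup (f := fun z => ‖fderiv ℝ φ z‖)
  obtain ⟨C, hC⟩ := (hφc.fderiv ℝ).exists_bound_of_continuous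
    (hφ.continuous_fderiv one_ne_zero)
  exact ⟨C, by rintro _ ⟨z, rfl⟩; exact hC z⟩

lemma L_nonneg (hφ : ContDiff ℝ 1 φ) (hφc : HasCompactSupport φ) :
    0 ≤ ⨆ z, ‖fderiv ℝ φ z‖ :=
  le_trans (norm_nonneg _) (fderiv_bound hφ hφc 0)

lemma phi_lip (hφ : ContDiff ℝ 1 φ) (hφc : HasCompactSupport φ) (a b : ℝ × ℝ) :
    |φ a - φ b| ≤ (⨆ z, ‖fderiv ℝ φ z‖) * ‖a - b‖ := by
  set L := ⨆ z, ‖fderiv ℝ φ z‖ with hL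
  have hlip : LipschitzWith L.toNNReal φ := by
    apply lipschitzWith_of_nnnorm_fderiv_le (hφ.differentiable one_ne_zero)
    intro x
    rw [← NNReal.coe_le_coe, coe_nnnorm, Real.coe_toNNReal _ (L_nonneg hφ hφc)]
    exact fderiv_bound hφ hφc x
  have := hlip.dist_le_mul a b
  rwa [Real.dist_eq, dist_eq_norm, Real.coe_toNNReal _ (L_nonneg hφ hφc)] at this

lemma moll_lip (hφ : ContDiff ℝ 1 φ) (hφc : HasCompactSupport φ) (hε : 0 < ε)
    (a b : ℝ × ℝ) :
    |mollifier φ ε a - mollifier φ ε b| ≤ (ε ^ 3)⁻¹ * (⨆ z, ‖fderiv ℝ φ z‖) * ‖a - b‖ := by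
  set L := ⨆ z, ‖fderiv ℝ φ z‖
  rw [mollifier, mollifier, ← mul_sub, abs_mul, abs_inv, abs_pow, abs_of_pos hε]
  calc (ε ^ 2)⁻¹ * |φ (ε⁻¹ • a) - φ (ε⁻¹ • b)| ≤ (ε ^ 2)⁻¹ * (L * ‖ε⁻¹ • a - ε⁻¹ • b‖) := by
        apply mul_le_mul_of_nonneg_left (phi_lip hφ hφc _ _) (by positivity)
    _ = (ε ^ 3)⁻¹ * L * ‖a - b‖ := by
        rw [← smul_sub, norm_smul, Real.norm_eq_abs, abs_inv, abs_of_pos hε]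
        field_simp

lemma moll_bound (hφ : ContDiff ℝ 1 φ) (hφc : HasCompactSupport φ) (ε : ℝ) :
    ∃ C, 0 ≤ C ∧ ∀ x, |mollifier φ ε x| ≤ C := by
  obtain ⟨C, hC⟩ := hφc.exists_bound_of_continuous hφ.continuous
  refine ⟨|(ε ^ 2)⁻¹| * C, ?_, fun x => ?_⟩
  · exact mul_nonneg (abs_nonneg _) (le_trans (norm_nonneg (φ 0)) (hC 0))
  · rw [mollifier, abs_mul]
    exact mul_le_mul_of_nonneg_left (hC _) (abs_nonneg _)

lemma moll_support_subset (hφc : HasCompactSupport φ) (hε : 0 < ε) :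
    tsupport (mollifier φ ε) ⊆ (fun z : ℝ × ℝ => ε • z) '' tsupport φ := by
  apply closure_minimal
  · intro z hz
    have hz' : φ (ε⁻¹ • z) ≠ 0 := by
      intro h; apply hz; simp [mollifier, h]
    exact ⟨ε⁻¹ • z, subset_closure hz', by
      simp [smul_smul, mul_inv_cancel₀ hε.ne']⟩
  · exact (hφc.image (continuous_const_smul ε)).isClosed

lemma moll_support_volume (hφc : HasCompactSupport φ) (hε : 0 < ε) :
    volume (tsupport (mollifier φ ε)) ≤ ENNReal.ofReal (ε ^ 2) * volume (tsupport φ) := by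
  calc volume (tsupport (mollifier φ ε)) ≤ volume ((fun z : ℝ × ℝ => ε • z) '' tsupport φ) :=
        measure_mono (moll_support_subset hφc hε)
    _ = ENNReal.ofReal (ε ^ 2) * volume (tsupport φ) := by
        rw [show (fun z : ℝ × ℝ => ε • z) '' tsupport φ = ε • tsupport φ from rfl,
          Measure.addHaar_smul]
        congr 2
        rw [abs_of_nonneg (by positivity)]
        norm_num

lemma moll_diff_lintegral {c : ℝ}
    (hlip : ∀ a b : ℝ × ℝ, |mollifier φ ε a - mollifier φ ε b| ≤ c * ‖a - b‖)
    (a b : ℝ × ℝ) :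
    (∫⁻ x, (‖mollifier φ ε (x - a) - mollifier φ ε (x - b)‖₊ : ℝ≥0∞)) ≤
      ENNReal.ofReal (c * ‖a - b‖) * (2 * volume (tsupport (mollifier φ ε))) := by
  set T := tsupport (mollifier φ ε) with hT
  set S := (fun x : ℝ × ℝ => x - a) ⁻¹' T ∪ (fun x : ℝ × ℝ => x - b) ⁻¹' T with hS
  have hTc : IsClosed T := isClosed_tsupport _
  have hSm : MeasurableSet S :=
    ((hTc.preimage (continuous_sub_right a)).union
      (hTc.preimage (continuous_sub_right b))).measurableSet
  have hpt : ∀ x, (‖mollifier φ ε (x - a) - mollifier φ ε (x - b)‖₊ : ℝ≥0∞) ≤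
      S.indicator (fun _ => ENNReal.ofReal (c * ‖a - b‖)) x := by
    intro x
    by_cases hx : x ∈ S
    · rw [Set.indicator_of_mem hx, ← enorm_eq_nnnorm, ← ofReal_norm_eq_enorm]
      apply ENNReal.ofReal_le_ofReal
      rw [Real.norm_eq_abs]
      calc |mollifier φ ε (x - a) - mollifier φ ε (x - b)| ≤ c * ‖(x - a) - (x - b)‖ :=
            hlip _ _
        _ = c * ‖a - b‖ := by rw [show (x - a) - (x - b) = -(a - b) by ring, norm_neg]
    · rw [Set.indicator_of_notMem hx]
      have h1 : mollifier φ ε (x - a) = 0 :=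
        image_eq_zero_of_notMem_tsupport (fun h => hx (Set.mem_union_left _ h))
      have h2 : mollifier φ ε (x - b) = 0 :=
        image_eq_zero_of_notMem_tsupport (fun h => hx (Set.mem_union_right _ h))
      simp [h1, h2]
  calc (∫⁻ x, (‖mollifier φ ε (x - a) - mollifier φ ε (x - b)‖₊ : ℝ≥0∞)) ≤
        ∫⁻ x, S.indicator (fun _ => ENNReal.ofReal (c * ‖a - b‖)) x := lintegral_mono hpt
    _ = ENNReal.ofReal (c * ‖a - b‖) * volume S := by
        rw [lintegral_indicator_const hSm]
    _ ≤ ENNReal.ofReal (c * ‖a - b‖) * (2 * volume T) := by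
        apply mul_le_mul_right
        calc volume S ≤ volume ((fun x : ℝ × ℝ => x - a) ⁻¹' T) +
              volume ((fun x : ℝ × ℝ => x - b) ⁻¹' T) := measure_union_le _ _
          _ = 2 * volume T := by
              simp only [sub_eq_add_neg]
              rw [measure_preimage_add_right, measure_preimage_add_right, two_mul]

end Moll

section Key

variable {φ ω : ℝ × ℝ → ℝ} {ε : ℝ}

lemma meas_moll_ind (hφ : ContDiff ℝ 1 φ) (x : ℝ × ℝ) (ℓ : ℝ) :
    Measurable fun y => mollifier φ ε (x - VBc ℓ (VBind ℓ y)) :=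
  ((moll_cont hφ ε).measurable.comp (measurable_const.sub
    ((measurable_of_countable (VBc ℓ)).comp (measurable_VBind ℓ))))

lemma int_G (hφ : ContDiff ℝ 1 φ) (hφc : HasCompactSupport φ) (hω : Integrable ω)
    (x : ℝ × ℝ) (ℓ : ℝ) :
    Integrable fun y => mollifier φ ε (x - VBc ℓ (VBind ℓ y)) * ω y := by
  obtain ⟨C, hC0, hC⟩ := moll_bound hφ hφc ε
  exact hω.bdd_mul ((meas_moll_ind hφ x ℓ).aestronglyMeasurable)
    (Filter.Eventually.of_forall fun y => by rw [Real.norm_eq_abs]; exact hC _)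

lemma int_H (hφ : ContDiff ℝ 1 φ) (hφc : HasCompactSupport φ) (hω : Integrable ω)
    (x : ℝ × ℝ) :
    Integrable fun y => mollifier φ ε (x - y) * ω y := by
  obtain ⟨C, hC0, hC⟩ := moll_bound hφ hφc ε
  exact hω.bdd_mul
    (((moll_cont hφ ε).comp (continuous_const.sub continuous_id)).aestronglyMeasurable)
    (Filter.Eventually.of_forall fun y => by rw [Real.norm_eq_abs]; exact hC _)

lemma blob_eq (hφ : ContDiff ℝ 1 φ) (hφc : HasCompactSupport φ) (hω : Integrable ω)
    (hε : 0 < ε) (x : ℝ × ℝ) :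
    blobApprox φ ω ε x = ∫ y, mollifier φ ε (x - VBc (ε ^ 4) (VBind (ε ^ 4) y)) * ω y := by
  have hℓ : (0 : ℝ) < ε ^ 4 := by positivity
  have hint := int_G (ε := ε) hφ hφc hω x (ε ^ 4)
  have hs : HasSum (fun i => ∫ y in blobSquare (ε ^ 4) i,
      mollifier φ ε (x - VBc (ε ^ 4) (VBind (ε ^ 4) y)) * ω y)
      (∫ y, mollifier φ ε (x - VBc (ε ^ 4) (VBind (ε ^ 4) y)) * ω y) := by
    have := hasSum_integral_iUnion (μ := volume)
      (f := fun y => mollifier φ ε (x - VBc (ε ^ 4) (VBind (ε ^ 4) y)) * ω y)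
      (blobSquare_measurable (ε ^ 4)) (blobSquare_disjoint hℓ)
      (by rw [blobSquare_iUnion hℓ]; exact hint.integrableOn)
    rwa [blobSquare_iUnion hℓ, Measure.restrict_univ] at this
  rw [blobApprox, ← hs.tsum_eq]
  congr 1
  funext i
  rw [show (((ε ^ 4) * (i.1 : ℝ), (ε ^ 4) * (i.2 : ℝ)) : ℝ × ℝ) = VBc (ε ^ 4) i from rfl]
  have : (∫ y in blobSquare (ε ^ 4) i,
      mollifier φ ε (x - VBc (ε ^ 4) (VBind (ε ^ 4) y)) * ω y) =
      (∫ y in blobSquare (ε ^ 4) i, ω y) * mollifier φ ε (x - VBc (ε ^ 4) i) := by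
    rw [setIntegral_congr_fun (blobSquare_measurable _ i)
      (g := fun y => ω y * mollifier φ ε (x - VBc (ε ^ 4) i)) ?_, integral_mul_const]
    intro y hy
    simp only
    rw [(mem_blobSquare_iff hℓ y i).1 hy]
    ring
  rw [this]

lemma key_diff_eq (hφ : ContDiff ℝ 1 φ) (hφc : HasCompactSupport φ) (hω : Integrable ω)
    (hε : 0 < ε) (x : ℝ × ℝ) :
    blobApprox φ ω ε x - mollified φ ω ε x =
      ∫ y, (mollifier φ ε (x - VBc (ε ^ 4) (VBind (ε ^ 4) y)) - mollifier φ ε (x - y)) * ω y := by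
  rw [blob_eq hφ hφc hω hε x, mollified, ← integral_sub (int_G hφ hφc hω x _) (int_H hφ hφc hω x)]
  congr 1
  funext y
  ring

lemma int_J (hφ : ContDiff ℝ 1 φ) (hφc : HasCompactSupport φ) (hω : Integrable ω)
    (x : ℝ × ℝ) :
    Integrable fun y =>
      (mollifier φ ε (x - VBc (ε ^ 4) (VBind (ε ^ 4) y)) - mollifier φ ε (x - y)) * ω y :=
  ((int_G hφ hφc hω x (ε ^ 4)).sub (int_H hφ hφc hω x)).congr
    (Filter.Eventually.of_forall fun y => by simp only [Pi.sub_apply]; ring)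

lemma key_bound (hφ : ContDiff ℝ 1 φ) (hφc : HasCompactSupport φ) (hω : Integrable ω)
    (hε : 0 < ε) (x : ℝ × ℝ) :
    |blobApprox φ ω ε x - mollified φ ω ε x| ≤
      (ε ^ 3)⁻¹ * (⨆ z, ‖fderiv ℝ φ z‖) * (ε ^ 4 / 2) * ∫ y, |ω y| := by
  set L := ⨆ z, ‖fderiv ℝ φ z‖
  have hℓ : (0 : ℝ) < ε ^ 4 := by positivity
  rw [key_diff_eq hφ hφc hω hε x, ← Real.norm_eq_abs]
  calc ‖∫ y, (mollifier φ ε (x - VBc (ε ^ 4) (VBind (ε ^ 4) y)) - mollifier φ ε (x - y)) * ω y‖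
      ≤ ∫ y, ‖(mollifier φ ε (x - VBc (ε ^ 4) (VBind (ε ^ 4) y)) - mollifier φ ε (x - y)) * ω y‖ :=
        norm_integral_le_integral_norm _
    _ ≤ ∫ y, (ε ^ 3)⁻¹ * L * (ε ^ 4 / 2) * |ω y| := by
        apply integral_mono (int_J hφ hφc hω x).norm ((hω.abs.const_mul _))
        intro y
        simp only
        rw [Real.norm_eq_abs, abs_mul]
        apply mul_le_mul_of_nonneg_right _ (abs_nonneg _)
        calc |mollifier φ ε (x - VBc (ε ^ 4) (VBind (ε ^ 4) y)) - mollifier φ ε (x - y)|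
            ≤ (ε ^ 3)⁻¹ * L * ‖(x - VBc (ε ^ 4) (VBind (ε ^ 4) y)) - (x - y)‖ :=
              moll_lip hφ hφc hε _ _
          _ ≤ (ε ^ 3)⁻¹ * L * (ε ^ 4 / 2) := by
              apply mul_le_mul_of_nonneg_left _
                (mul_nonneg (by positivity) (L_nonneg hφ hφc))
              rw [show (x - VBc (ε ^ 4) (VBind (ε ^ 4) y)) - (x - y) =
                y - VBc (ε ^ 4) (VBind (ε ^ 4) y) by ring]
              exact norm_sub_center hℓ (mem_blobSquare_ind hℓ y)
    _ = (ε ^ 3)⁻¹ * L * (ε ^ 4 / 2) * ∫ y, |ω y| := integral_const_mul _ _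

end Key

/-! ### L¹ bound -/

lemma l1_bound {φ ω : ℝ × ℝ → ℝ} {ε : ℝ} (hφ : ContDiff ℝ 1 φ)
    (hφc : HasCompactSupport φ) (hω : Integrable ω) (hε : 0 < ε) :
    (∫⁻ x, (‖blobApprox φ ω ε x - mollified φ ω ε x‖₊ : ℝ≥0∞)) ≤
      ENNReal.ofReal (((⨆ z, ‖fderiv ℝ φ z‖) * (volume (tsupport φ)).toReal + 1) *
        (∫ y, |ω y|) * ε ^ 3) := by
  set L := ⨆ z, ‖fderiv ℝ φ z‖ with hLdef
  have hL0 : 0 ≤ L := L_nonneg hφ hφc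
  have hℓ : (0 : ℝ) < ε ^ 4 := by positivity
  set V := (volume (tsupport φ)).toReal with hVdef
  have hV0 : 0 ≤ V := ENNReal.toReal_nonneg
  have hVfin : volume (tsupport φ) ≠ ∞ := hφc.measure_lt_top.ne
  have hVeq : volume (tsupport φ) = ENNReal.ofReal V := (ENNReal.ofReal_toReal hVfin).symm
  set W := ∫ y, |ω y| with hWdef
  have hW0 : 0 ≤ W := integral_nonneg fun y => abs_nonneg _
  set c := (ε ^ 3)⁻¹ * L with hcdef
  have hc0 : 0 ≤ c := by positivity
  have hlip := moll_lip hφ hφc hε (φ := φ)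
  set T := tsupport (mollifier φ ε) with hTdef
  have hTfin : volume T ≠ ∞ := by
    refine ne_top_of_le_ne_top ?_ (moll_support_volume hφc hε)
    exact ENNReal.mul_ne_top ENNReal.ofReal_ne_top hVfin
  set K : ℝ≥0∞ := ENNReal.ofReal (c * (ε ^ 4 / 2)) * (2 * volume T) with hKdef
  have hKfin : K ≠ ∞ :=
    ENNReal.mul_ne_top ENNReal.ofReal_ne_top
      (ENNReal.mul_ne_top (by norm_num) hTfin)
  have step1 : ∀ x, (‖blobApprox φ ω ε x - mollified φ ω ε x‖₊ : ℝ≥0∞) ≤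
      ∫⁻ y, (‖mollifier φ ε (x - VBc (ε ^ 4) (VBind (ε ^ 4) y)) - mollifier φ ε (x - y)‖₊ : ℝ≥0∞)
        * (‖ω y‖₊ : ℝ≥0∞) := by
    intro x
    rw [key_diff_eq hφ hφc hω hε x]
    refine le_trans (enorm_integral_le_lintegral_enorm _) (le_of_eq ?_)
    apply lintegral_congr
    intro y
    rw [enorm_mul, enorm_eq_nnnorm, enorm_eq_nnnorm]
  have meas1 : Measurable fun z : (ℝ × ℝ) × (ℝ × ℝ) =>
      (‖mollifier φ ε (z.1 - VBc (ε ^ 4) (VBind (ε ^ 4) z.2)) -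
        mollifier φ ε (z.1 - z.2)‖₊ : ℝ≥0∞) := by
    apply Measurable.coe_nnreal_ennreal
    apply Measurable.nnnorm
    exact ((moll_cont hφ ε).measurable.comp
        (measurable_fst.sub ((measurable_of_countable (VBc (ε ^ 4))).comp
          ((measurable_VBind (ε ^ 4)).comp measurable_snd)))).sub
      ((moll_cont hφ ε).measurable.comp (measurable_fst.sub measurable_snd))
  have meas2 : AEMeasurable (fun z : (ℝ × ℝ) × (ℝ × ℝ) => (‖ω z.2‖₊ : ℝ≥0∞))
      ((volume : Measure (ℝ × ℝ)).prod volume) :=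
    (hω.aemeasurable.nnnorm.coe_nnreal_ennreal).comp_quasiMeasurePreserving
      Measure.quasiMeasurePreserving_snd
  calc (∫⁻ x, (‖blobApprox φ ω ε x - mollified φ ω ε x‖₊ : ℝ≥0∞))
      ≤ ∫⁻ x, ∫⁻ y,
          (‖mollifier φ ε (x - VBc (ε ^ 4) (VBind (ε ^ 4) y)) - mollifier φ ε (x - y)‖₊ : ℝ≥0∞)
            * (‖ω y‖₊ : ℝ≥0∞) := lintegral_mono step1
    _ = ∫⁻ y, ∫⁻ x,
          (‖mollifier φ ε (x - VBc (ε ^ 4) (VBind (ε ^ 4) y)) - mollifier φ ε (x - y)‖₊ : ℝ≥0∞)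
            * (‖ω y‖₊ : ℝ≥0∞) := by
        apply lintegral_lintegral_swap
        exact (meas1.aemeasurable.mul meas2)
    _ ≤ ∫⁻ y, K * (‖ω y‖₊ : ℝ≥0∞) := by
        apply lintegral_mono
        intro y
        simp only
        rw [lintegral_mul_const' _ _ ENNReal.coe_ne_top]
        apply mul_le_mul_left
        calc (∫⁻ x, (‖mollifier φ ε (x - VBc (ε ^ 4) (VBind (ε ^ 4) y)) -
                mollifier φ ε (x - y)‖₊ : ℝ≥0∞))
            ≤ ENNReal.ofReal (c * ‖VBc (ε ^ 4) (VBind (ε ^ 4) y) - y‖) * (2 * volume T) :=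
              moll_diff_lintegral hlip _ _
          _ ≤ K := by
              rw [hKdef]
              apply mul_le_mul_left
              apply ENNReal.ofReal_le_ofReal
              apply mul_le_mul_of_nonneg_left _ hc0
              rw [norm_sub_rev]
              exact norm_sub_center hℓ (mem_blobSquare_ind hℓ y)
    _ = K * ENNReal.ofReal W := by
        rw [lintegral_const_mul' _ _ hKfin]
        congr 1
        rw [show (∫⁻ a, (‖ω a‖₊ : ℝ≥0∞)) = ∫⁻ a, ‖ω a‖ₑ from rfl,
          ← ofReal_integral_norm_eq_lintegral_enorm hω]
        simp only [Real.norm_eq_abs, hWdef]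
    _ ≤ ENNReal.ofReal (c * (ε ^ 4 / 2)) * (2 * (ENNReal.ofReal (ε ^ 2) * ENNReal.ofReal V))
        * ENNReal.ofReal W := by
        apply mul_le_mul_left
        apply mul_le_mul_right
        apply mul_le_mul_right
        rw [← hVeq]
        exact moll_support_volume hφc hε
    _ ≤ ENNReal.ofReal ((L * V + 1) * W * ε ^ 3) := by
        rw [show (2 : ℝ≥0∞) = ENNReal.ofReal 2 by norm_num]
        rw [← ENNReal.ofReal_mul (by positivity), ← ENNReal.ofReal_mul (by norm_num),
          ← ENNReal.ofReal_mul (by positivity), ← ENNReal.ofReal_mul (by positivity)]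
        apply ENNReal.ofReal_le_ofReal
        rw [hcdef]
        have : (ε ^ 3)⁻¹ * L * (ε ^ 4 / 2) * (2 * (ε ^ 2 * V)) * W = L * V * W * ε ^ 3 := by
          field_simp
        rw [this]
        nlinarith
  
/-! ### Real interpolation arithmetic -/

lemma rpow_interp {A B C W ε p : ℝ} (hA : 0 < A) (hB : 0 < B) (hW : 0 < W) (hε : 0 < ε)
    (hp : 1 ≤ p) (hAC : A ≤ C) (hBC : B ≤ C) :
    ((A * W * ε) ^ (p - 1) * (B * (W * ε ^ 3))) ^ (1 / p) ≤ C * W * ε ^ (1 + 2 / p) := by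
  have hp0 : 0 < p := lt_of_lt_of_le one_pos hp
  have hC : 0 < C := lt_of_lt_of_le hA hAC
  have h1 : (A * W * ε) ^ (p - 1) = A ^ (p - 1) * W ^ (p - 1) * ε ^ (p - 1) := by
    rw [Real.mul_rpow (by positivity) hε.le, Real.mul_rpow hA.le hW.le]
  have he3 : (ε ^ 3 : ℝ) = ε ^ ((3 : ℕ) : ℝ) := (Real.rpow_natCast ε 3).symm
  have h2 : A ^ (p - 1) * W ^ (p - 1) * ε ^ (p - 1) * (B * (W * ε ^ 3)) =
      (A ^ (p - 1) * B) * ((W ^ (p - 1) * W ^ (1 : ℝ)) * (ε ^ (p - 1) * ε ^ ((3 : ℕ) : ℝ))) := by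
    rw [Real.rpow_one, ← he3]; ring
  have h3 : W ^ (p - 1) * W ^ (1 : ℝ) = W ^ p := by
    rw [← Real.rpow_add hW]; norm_num
  have h4 : ε ^ (p - 1) * ε ^ ((3 : ℕ) : ℝ) = ε ^ (p + 2) := by
    rw [← Real.rpow_add hε]; norm_num; ring_nf
  rw [h1, h2, h3, h4]
  have h5 : ((A ^ (p - 1) * B) * (W ^ p * ε ^ (p + 2))) ^ (1 / p) =
      (A ^ (p - 1)) ^ (1 / p) * B ^ (1 / p) * ((W ^ p) ^ (1 / p) * (ε ^ (p + 2)) ^ (1 / p)) := by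
    rw [Real.mul_rpow (by positivity) (by positivity),
      Real.mul_rpow (by positivity) hB.le,
      Real.mul_rpow (by positivity) (by positivity)]
  rw [h5]
  have hW1 : (W ^ p) ^ (1 / p) = W := by
    rw [← Real.rpow_mul hW.le, mul_one_div, div_self hp0.ne', Real.rpow_one]
  have hε1 : (ε ^ (p + 2)) ^ (1 / p) = ε ^ (1 + 2 / p) := by
    rw [← Real.rpow_mul hε.le]
    congr 1
    field_simp
  rw [hW1, hε1]
  have hfin : (A ^ (p - 1)) ^ (1 / p) * B ^ (1 / p) ≤ C := by
    calc (A ^ (p - 1)) ^ (1 / p) * B ^ (1 / p)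
        ≤ (C ^ (p - 1)) ^ (1 / p) * C ^ (1 / p) := by
          apply mul_le_mul _ _ (by positivity) (by positivity)
          · exact Real.rpow_le_rpow (by positivity)
              (Real.rpow_le_rpow hA.le hAC (by linarith)) (by positivity)
          · exact Real.rpow_le_rpow hB.le hBC (by positivity)
      _ = C := by
          rw [← Real.rpow_mul hC.le, ← Real.rpow_add hC, mul_one_div]
          rw [show (p - 1) / p + 1 / p = 1 by field_simp; ring, Real.rpow_one]
  calc (A ^ (p - 1)) ^ (1 / p) * B ^ (1 / p) * (W * ε ^ (1 + 2 / p))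
      ≤ C * (W * ε ^ (1 + 2 / p)) := by
        apply mul_le_mul_of_nonneg_right hfin (by positivity)
    _ = C * W * ε ^ (1 + 2 / p) := by ring

theorem vortex_blob_Linfty_and_Lp_estimate
    (φ : ℝ × ℝ → ℝ) (hφ : ContDiff ℝ 1 φ) (hφc : HasCompactSupport φ) :
    (∀ ω : ℝ × ℝ → ℝ, Integrable ω → ∀ ε ∈ Set.Ioo (0 : ℝ) 1, ∀ x,
        |blobApprox φ ω ε x - mollified φ ω ε x| ≤
          Real.sqrt 2 * (ε ^ 4 / ε ^ 3) * (⨆ z, ‖fderiv ℝ φ z‖) * ∫ y, |ω y|) ∧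
      ∃ C : ℝ, 0 < C ∧
        ∀ ω : ℝ × ℝ → ℝ, Integrable ω → ∀ ε ∈ Set.Ioo (0 : ℝ) 1, ∀ p : ℝ, 1 ≤ p →
          eLpNorm (fun x => blobApprox φ ω ε x - mollified φ ω ε x)
              (ENNReal.ofReal p) volume ≤
            ENNReal.ofReal (C * (∫ y, |ω y|) * ε ^ (1 + 2 / p)) := by
  set L := ⨆ z, ‖fderiv ℝ φ z‖ with hLdef
  have hL0 : 0 ≤ L := L_nonneg hφ hφc
  have hs2 : (1 : ℝ) ≤ Real.sqrt 2 := by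
    rw [show (1 : ℝ) = Real.sqrt 1 by simp]
    exact Real.sqrt_le_sqrt (by norm_num)
  constructor
  · intro ω hω ε hε x
    have hε0 : 0 < ε := hε.1
    have hW0 : (0 : ℝ) ≤ ∫ y, |ω y| := integral_nonneg fun y => abs_nonneg _
    refine (key_bound hφ hφc hω hε0 x).trans ?_
    have hε3 : (0 : ℝ) < ε ^ 3 := by positivity
    have heq : (ε ^ 3)⁻¹ * L * (ε ^ 4 / 2) = ε / 2 * L := by field_simp
    have heq2 : ε ^ 4 / ε ^ 3 = ε := by field_simp
    rw [heq, heq2]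
    nlinarith [mul_nonneg (mul_nonneg hε0.le hL0) hW0,
      mul_nonneg (sub_nonneg.2 hs2) (mul_nonneg (mul_nonneg hε0.le hL0) hW0)]
  · set V := (volume (tsupport φ)).toReal with hVdef
    have hV0 : 0 ≤ V := ENNReal.toReal_nonneg
    set A := L + 1 with hAdef
    set B := L * V + 1 with hBdef
    refine ⟨A + B + 1, by rw [hAdef, hBdef]; nlinarith [mul_nonneg hL0 hV0], ?_⟩
    intro ω hω ε hε p hp
    have hε0 : 0 < ε := hε.1
    have hp0 : 0 < p := lt_of_lt_of_le one_pos hp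
    set W := ∫ y, |ω y| with hWdef
    have hW0 : 0 ≤ W := integral_nonneg fun y => abs_nonneg _
    have hDb : ∀ x, |blobApprox φ ω ε x - mollified φ ω ε x| ≤ A * W * ε := by
      intro x
      refine (key_bound hφ hφc hω hε0 x).trans ?_
      have hε3 : (0 : ℝ) < ε ^ 3 := by positivity
      have heq : (ε ^ 3)⁻¹ * L * (ε ^ 4 / 2) = ε / 2 * L := by field_simp
      rw [heq]
      nlinarith [mul_nonneg (mul_nonneg hε0.le hW0) hL0, mul_nonneg hε0.le hW0]
    rcases eq_or_lt_of_le hW0 with hWz | hWpos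
    · have hzero : (fun x => blobApprox φ ω ε x - mollified φ ω ε x) = fun _ => (0 : ℝ) := by
        funext x
        have := hDb x
        rw [← hWz] at this
        simp only [mul_zero, zero_mul] at this
        exact abs_nonpos_iff.mp this
      rw [hzero, eLpNorm_zero']
      exact zero_le
    · have hA : 0 < A := by rw [hAdef]; linarith
      have hB : 0 < B := by rw [hBdef]; nlinarith [mul_nonneg hL0 hV0]
      have hM : 0 < A * W * ε := mul_pos (mul_pos hA hWpos) hε0
      have hl1 : (∫⁻ x, (‖blobApprox φ ω ε x - mollified φ ω ε x‖₊ : ℝ≥0∞)) ≤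
          ENNReal.ofReal (B * (W * ε ^ 3)) := by
        refine (l1_bound hφ hφc hω hε.1).trans (ENNReal.ofReal_le_ofReal (le_of_eq ?_))
        rw [hBdef]; ring
      have hpne : (ENNReal.ofReal p) ≠ 0 := by
        simp only [ne_eq, ENNReal.ofReal_eq_zero, not_le]
        exact hp0
      rw [eLpNorm_eq_lintegral_rpow_enorm_toReal hpne ENNReal.ofReal_ne_top,
        ENNReal.toReal_ofReal hp0.le]
      have hpt : ∀ x, (‖blobApprox φ ω ε x - mollified φ ω ε x‖₊ : ℝ≥0∞) ^ p ≤
          ENNReal.ofReal (A * W * ε) ^ (p - 1) *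
            (‖blobApprox φ ω ε x - mollified φ ω ε x‖₊ : ℝ≥0∞) := by
        intro x
        set a := (‖blobApprox φ ω ε x - mollified φ ω ε x‖₊ : ℝ≥0∞) with hadef
        have ha : a ≤ ENNReal.ofReal (A * W * ε) := by
          rw [hadef, ← enorm_eq_nnnorm, ← ofReal_norm_eq_enorm]
          exact ENNReal.ofReal_le_ofReal (by rw [Real.norm_eq_abs]; exact hDb x)
        rcases eq_or_ne a 0 with h0 | h0
        · rw [h0, ENNReal.zero_rpow_of_pos hp0]
          exact zero_le
        · have haf : a ≠ ∞ := ENNReal.coe_ne_top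
          calc a ^ p = a ^ (p - 1) * a := by
                conv_lhs => rw [show p = (p - 1) + 1 by ring]
                rw [ENNReal.rpow_add _ _ h0 haf, ENNReal.rpow_one]
            _ ≤ ENNReal.ofReal (A * W * ε) ^ (p - 1) * a :=
                mul_le_mul_left (ENNReal.rpow_le_rpow ha (by linarith)) _
      have hMne : ENNReal.ofReal (A * W * ε) ^ (p - 1) ≠ ∞ :=
        ENNReal.rpow_ne_top_of_nonneg (by linarith) ENNReal.ofReal_ne_top
      calc (∫⁻ x, (‖blobApprox φ ω ε x - mollified φ ω ε x‖₊ : ℝ≥0∞) ^ p) ^ (1 / p)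
          ≤ (∫⁻ x, ENNReal.ofReal (A * W * ε) ^ (p - 1) *
              (‖blobApprox φ ω ε x - mollified φ ω ε x‖₊ : ℝ≥0∞)) ^ (1 / p) :=
            ENNReal.rpow_le_rpow (lintegral_mono hpt) (by positivity)
        _ = (ENNReal.ofReal (A * W * ε) ^ (p - 1) *
              ∫⁻ x, (‖blobApprox φ ω ε x - mollified φ ω ε x‖₊ : ℝ≥0∞)) ^ (1 / p) := by
            rw [lintegral_const_mul' _ _ hMne]
        _ ≤ (ENNReal.ofReal ((A * W * ε) ^ (p - 1)) * ENNReal.ofReal (B * (W * ε ^ 3))) ^ (1 / p) := by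
            rw [← ENNReal.ofReal_rpow_of_nonneg hM.le (by linarith)]
            exact ENNReal.rpow_le_rpow (mul_le_mul_right hl1 _) (by positivity)
        _ = ENNReal.ofReal (((A * W * ε) ^ (p - 1) * (B * (W * ε ^ 3))) ^ (1 / p)) := by
            rw [← ENNReal.ofReal_mul (by positivity),
              ENNReal.ofReal_rpow_of_nonneg (by positivity) (by positivity)]
        _ ≤ ENNReal.ofReal ((A + B + 1) * W * ε ^ (1 + 2 / p)) := by
            apply ENNReal.ofReal_le_ofReal
            exact rpow_interp hA hB hWpos hε0 hp (by linarith) (by linarith)
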